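/- arXiv:1706.00834 — 5 statements merged into one kernel-verified Lean document; each statement's English description precedes it below -/
import Mathlib

section
/- Let E be a nonempty finite index set, let ŵ : E → ℝ be strictly positive, and let k > 0 be a real number. Define w* : E → ℝ by w*_e = k·ŵ_e / (∑_{e'∈E} ŵ_{e'}). Then w* is nonnegative with ∑_{e∈E} w*_e = k, and for every nonnegative w : E → ℝ with ∑_{e∈E} w_e = k one has Δ(w*‖ŵ) ≤ Δ(w‖ŵ). (That is, the relative entropy projection of ŵ onto the normalization constraint {w ≥ 0 : ∑ w_e = k} is obtained by rescaling ŵ to total mass k.) -/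
open Real Finset

/-- Unnormalized relative entropy `Δ(a‖b) = ∑ₑ (aₑ log(aₑ/bₑ) + bₑ − aₑ)`
(with the convention `0 · log 0 = 0`, automatic since `Real.log 0 = 0`). -/
noncomputable def relEnt {E : Type*} [Fintype E] (a b : E → ℝ) : ℝ :=
  ∑ e, (a e * Real.log (a e / b e) + b e - a e)

lemma pointwise_ineq {a b A B : ℝ} (ha : 0 ≤ a) (hb : 0 < b) (hA : 0 < A) (hB : 0 < B) :
    a * Real.log (A / B) + a - b * A / B ≤ a * Real.log (a / b) := by
  rcases eq_or_lt_of_le ha with h | h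
  · have h1 : 0 < b * A / B := by positivity
    simp only [← h, zero_mul, zero_add, zero_sub, mul_zero]
    linarith
  · have hx : 0 < b * A / (a * B) := by positivity
    have hlog := Real.log_le_sub_one_of_pos hx
    have h1 : Real.log (b * A / (a * B)) = Real.log (A / B) - Real.log (a / b) := by
      rw [Real.log_div (by positivity) (by positivity), Real.log_mul (ne_of_gt hb) (ne_of_gt hA),
        Real.log_mul (ne_of_gt h) (ne_of_gt hB), Real.log_div (ne_of_gt hA) (ne_of_gt hB),
        Real.log_div (ne_of_gt h) (ne_of_gt hb)]
      ring
    rw [h1] at hlog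
    have := mul_le_mul_of_nonneg_left hlog ha
    have h2 : a * (b * A / (a * B) - 1) = b * A / B - a := by
      field_simp
    rw [h2, mul_sub] at this
    linarith

/-- The relative entropy projection of a positive vector `ŵ` onto the
normalization constraint `{w ≥ 0 : ∑ wₑ = k}` is obtained by rescaling `ŵ`
to total mass `k`. -/
theorem relEnt_proj_normalization
    {E : Type*} [Fintype E] [Nonempty E]
    (what : E → ℝ) (hwhat : ∀ e, 0 < what e)
    (k : ℝ) (hk : 0 < k)
    (wstar : E → ℝ)
    (hwstar : ∀ e, wstar e = k * what e / ∑ e', what e') :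
    (∀ e, 0 ≤ wstar e) ∧ (∑ e, wstar e = k) ∧
      ∀ w : E → ℝ, (∀ e, 0 ≤ w e) → (∑ e, w e = k) →
        relEnt wstar what ≤ relEnt w what := by
  set S := ∑ e', what e' with hS
  have hSpos : 0 < S := Finset.sum_pos (fun e _ => hwhat e) Finset.univ_nonempty
  have hsum : ∑ e, wstar e = k := by
    simp only [hwstar]
    rw [← Finset.sum_div, ← Finset.mul_sum, ← hS, mul_div_assoc, div_self hSpos.ne', mul_one]
  refine ⟨fun e => by rw [hwstar]; exact div_nonneg (mul_nonneg hk.le (hwhat e).le) hSpos.le, hsum, fun w hw hwk => ?_⟩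
  have hstar : relEnt wstar what = k * Real.log (k / S) + S - k := by
    unfold relEnt
    have : ∀ e, wstar e * Real.log (wstar e / what e) + what e - wstar e
        = wstar e * Real.log (k / S) + what e - wstar e := by
      intro e
      have : wstar e / what e = k / S := by
        rw [hwstar]; field_simp [hSpos.ne', (hwhat e).ne']
      rw [this]
    simp only [this]
    rw [Finset.sum_sub_distrib, Finset.sum_add_distrib, ← Finset.sum_mul, hsum, ← hS]
  rw [hstar]
  unfold relEnt
  rw [Finset.sum_sub_distrib, Finset.sum_add_distrib, ← hS, hwk]
  have key : k * Real.log (k / S) ≤ ∑ e, w e * Real.log (w e / what e) := by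
    have := Finset.sum_le_sum (f := fun e => w e * Real.log (k / S) + w e - what e * k / S)
      (g := fun e => w e * Real.log (w e / what e)) (s := Finset.univ)
      (fun e _ => pointwise_ineq (hw e) (hwhat e) hk hSpos)
    calc k * Real.log (k / S) = ∑ e, (w e * Real.log (k / S) + w e - what e * k / S) := by
          rw [Finset.sum_sub_distrib, Finset.sum_add_distrib, ← Finset.sum_mul, hwk,
            ← Finset.sum_div, ← Finset.sum_mul, ← hS]
          field_simp
          ring
      _ ≤ _ := this
  linarith
end

section
/- Let k ≥ 1 be a natural number and let ŵ : Fin k → ℝ be strictly positive. Let c* = (∏_{j} ŵ_j)^{1/k} be the geometric mean of the ŵ_j. Then for every real c ≥ 0, ∑_{j} (c*·log(c*/ŵ_j) + ŵ_j − c*) ≤ ∑_{j} (c·log(c/ŵ_j) + ŵ_j − c). (That is, the relative entropy projection of ŵ onto the constraint that all k coordinates are equal sets every coordinate to the geometric mean of the coordinates of ŵ.) -/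
open Real Finset

/-- The relative entropy projection of a positive vector `ŵ : Fin k → ℝ`
onto the constraint that all `k` coordinates are equal sets every coordinate
to the geometric mean `c* = (∏ⱼ ŵⱼ)^{1/k}` of the coordinates of `ŵ`:
for every admissible constant vector `c·1` (with `c ≥ 0`),
`Δ(c*·1‖ŵ) ≤ Δ(c·1‖ŵ)`. -/
theorem relEnt_proj_geometric_mean
    (k : ℕ) (hk : 1 ≤ k)
    (what : Fin k → ℝ) (hwhat : ∀ j, 0 < what j)
    (cstar : ℝ) (hcstar : cstar = (∏ j, what j) ^ ((1 : ℝ) / k)) :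
    ∀ c : ℝ, 0 ≤ c →
      ∑ j, (cstar * Real.log (cstar / what j) + what j - cstar) ≤
        ∑ j, (c * Real.log (c / what j) + what j - c) := by
  intro c hc
  have hkpos : (0:ℝ) < k := by exact_mod_cast hk
  have hprod : 0 < ∏ j, what j := Finset.prod_pos (fun j _ => hwhat j)
  have hcs : 0 < cstar := by rw [hcstar]; positivity
  set S := ∑ j, Real.log (what j) with hS
  have hlogcs : (k : ℝ) * Real.log cstar = S := by
    rw [hcstar, Real.log_rpow hprod, Real.log_prod (fun j _ => (hwhat j).ne')]
    field_simp
    exact hS.symm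
  have expand : ∀ d : ℝ, 0 < d →
      ∑ j, (d * Real.log (d / what j) + what j - d)
        = (k : ℝ) * (d * Real.log d) - d * S + (∑ j, what j) - k * d := by
    intro d hd
    have h1 : ∀ j ∈ Finset.univ, d * Real.log (d / what j) + what j - d
        = (d * Real.log d - d * Real.log (what j)) + what j - d := by
      intro j _
      rw [Real.log_div hd.ne' (hwhat j).ne']; ring
    rw [Finset.sum_congr rfl h1]
    simp only [Finset.sum_sub_distrib, Finset.sum_add_distrib, ← Finset.mul_sum,
      Finset.sum_const, Finset.card_univ, Fintype.card_fin, nsmul_eq_mul, ← hS]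
    ring
  rw [expand cstar hcs]
  rcases eq_or_lt_of_le hc with h0 | hcpos
  · -- c = 0
    have : ∀ j ∈ Finset.univ, c * Real.log (c / what j) + what j - c = what j := by
      intro j _; rw [← h0]; ring
    rw [Finset.sum_congr rfl this]
    have : (k:ℝ) * (cstar * Real.log cstar) - cstar * S = 0 := by
      rw [← hlogcs]; ring
    nlinarith [mul_pos hkpos hcs]
  · rw [expand c hcpos]
    have key : cstar - c + c * Real.log (c / cstar) ≥ 0 := by
      have h1 : Real.log (cstar / c) ≤ cstar / c - 1 :=
        Real.log_le_sub_one_of_pos (by positivity)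
      have h2 : c * Real.log (cstar / c) ≤ cstar - c := by
        have := mul_le_mul_of_nonneg_left h1 hcpos.le
        calc c * Real.log (cstar / c) ≤ c * (cstar / c - 1) := this
          _ = cstar - c := by field_simp
      have h3 : Real.log (c / cstar) = - Real.log (cstar / c) := by
        rw [← Real.log_inv, inv_div]
      rw [h3]; linarith
    have hlogdiv : Real.log (c / cstar) = Real.log c - Real.log cstar :=
      Real.log_div hcpos.ne' hcs.ne'
    have hcsS : cstar * S = (k:ℝ) * (cstar * Real.log cstar) := by rw [← hlogcs]; ring
    have hcS : c * S = (k:ℝ) * (c * Real.log cstar) := by rw [← hlogcs]; ring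
    have hd : c * Real.log (c / cstar) = c * Real.log c - c * Real.log cstar := by
      rw [hlogdiv]; ring
    rw [hcsS, hcS]
    nlinarith [mul_nonneg hkpos.le key, hd, hkpos]
end

section
/- Let a, b ≥ 1 and k ≥ 1 be natural numbers, let û : Fin a → ℝ (incoming weights) and v̂ : Fin b → ℝ (outgoing weights) be strictly positive, and set β = (k·(∑_i û_i)/(∑_j v̂_j))^{1/(k+1)}. Define u*_i = û_i·β^{−k} and v*_j = v̂_j·β. Then ∑_j v*_j = k·∑_i u*_i, and for every pair of nonnegative vectors u : Fin a → ℝ, v : Fin b → ℝ satisfying ∑_j v_j = k·∑_i u_i one has Δ((u*,v*)‖(û,v̂)) ≤ Δ((u,v)‖(û,v̂)), where Δ is taken over the disjoint union of the two index sets. (That is, the relative entropy projection of (û,v̂) onto the k-flow constraint 'outflow equals k times inflow' multiplies all outgoing weights by β and all incoming weights by β^{−k}.) -/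
open Real Finset

lemma ent_term_nonneg {x y : ℝ} (hx : 0 ≤ x) (hy : 0 < y) :
    0 ≤ x * Real.log (x / y) + y - x := by
  rcases eq_or_lt_of_le hx with h | h
  · rw [← h]; simpa using hy.le
  · have hlog : Real.log (y / x) ≤ y / x - 1 :=
      Real.log_le_sub_one_of_pos (by positivity)
    have h3 : Real.log (y / x) = -Real.log (x / y) := by
      rw [← Real.log_inv, inv_div]
    have h1 : x * Real.log (y / x) ≤ x * (y / x - 1) :=
      mul_le_mul_of_nonneg_left hlog hx
    have h2 : x * (y / x - 1) = y - x := by field_simp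
    rw [h3] at h1
    nlinarith

/-- The relative entropy projection of `(û, v̂)` onto the `k`-flow constraint
"outflow equals `k` times inflow" multiplies all outgoing weights by
`β = (k·(∑û)/(∑v̂))^{1/(k+1)}` and all incoming weights by `β^{-k}`. -/
theorem relEnt_proj_kflow
    (a b k : ℕ) (ha : 1 ≤ a) (hb : 1 ≤ b) (hk : 1 ≤ k)
    (uhat : Fin a → ℝ) (vhat : Fin b → ℝ)
    (huhat : ∀ i, 0 < uhat i) (hvhat : ∀ j, 0 < vhat j)
    (β : ℝ) (hβ : β = ((k : ℝ) * (∑ i, uhat i) / (∑ j, vhat j)) ^ ((1 : ℝ) / (k + 1)))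
    (ustar : Fin a → ℝ) (vstar : Fin b → ℝ)
    (hustar : ∀ i, ustar i = uhat i * β ^ (-(k : ℝ)))
    (hvstar : ∀ j, vstar j = vhat j * β) :
    (∑ j, vstar j = k * ∑ i, ustar i) ∧
      ∀ (u : Fin a → ℝ) (v : Fin b → ℝ),
        (∀ i, 0 ≤ u i) → (∀ j, 0 ≤ v j) →
        (∑ j, v j = k * ∑ i, u i) →
        (∑ i, (ustar i * Real.log (ustar i / uhat i) + uhat i - ustar i)) +
            (∑ j, (vstar j * Real.log (vstar j / vhat j) + vhat j - vstar j)) ≤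
          (∑ i, (u i * Real.log (u i / uhat i) + uhat i - u i)) +
            (∑ j, (v j * Real.log (v j / vhat j) + vhat j - v j)) := by
  have haU : (Finset.univ : Finset (Fin a)).Nonempty := by
    simpa [Finset.univ_nonempty_iff] using Fin.pos_iff_nonempty.mp ha
  have hbU : (Finset.univ : Finset (Fin b)).Nonempty := by
    simpa [Finset.univ_nonempty_iff] using Fin.pos_iff_nonempty.mp hb
  set U := ∑ i, uhat i with hU
  set V := ∑ j, vhat j with hV
  have hUpos : 0 < U := Finset.sum_pos (fun i _ => huhat i) haU
  have hVpos : 0 < V := Finset.sum_pos (fun j _ => hvhat j) hbU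
  have hkpos : (0:ℝ) < k := by exact_mod_cast hk
  set c : ℝ := (k : ℝ) * U / V with hc
  have hcpos : 0 < c := by positivity
  have hβpos : 0 < β := by rw [hβ]; positivity
  have hk1 : ((k:ℝ) + 1) ≠ 0 := by positivity
  have hkey : β ^ ((k:ℝ) + 1) = c := by
    rw [hβ, ← Real.rpow_mul hcpos.le, one_div_mul_cancel hk1, Real.rpow_one]
  have hβk : 0 < β ^ ((k:ℝ)) := Real.rpow_pos_of_pos hβpos _
  have hβnk : 0 < β ^ (-(k:ℝ)) := Real.rpow_pos_of_pos hβpos _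
  have hinv : β ^ (-(k:ℝ)) * β ^ ((k:ℝ)) = 1 := by
    rw [← Real.rpow_add hβpos]; simp
  have hββk : β * β ^ ((k:ℝ)) = c := by
    nth_rewrite 1 [← Real.rpow_one β]
    rw [← Real.rpow_add hβpos, add_comm, hkey]
  -- the balance equality for the projected vectors
  have hbal : V * β = (k:ℝ) * (U * β ^ (-(k:ℝ))) := by
    apply mul_right_cancel₀ (ne_of_gt hβk)
    calc V * β * β ^ ((k:ℝ)) = V * c := by rw [mul_assoc, hββk]
      _ = (k:ℝ) * U := by rw [hc]; field_simp
      _ = (k:ℝ) * (U * β ^ (-(k:ℝ))) * β ^ ((k:ℝ)) := by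
          rw [mul_assoc, mul_assoc, hinv, mul_one]
  have hsum_ustar : ∑ i, ustar i = U * β ^ (-(k:ℝ)) := by
    simp only [hustar, ← Finset.sum_mul, hU]
  have hsum_vstar : ∑ j, vstar j = V * β := by
    simp only [hvstar, ← Finset.sum_mul, hV]
  have hbal' : ∑ j, vstar j = (k:ℝ) * ∑ i, ustar i := by
    rw [hsum_ustar, hsum_vstar, hbal]
  refine ⟨hbal', ?_⟩
  intro u v hu hv hcon
  set L : ℝ := Real.log β with hL
  have hLu : ∀ i, Real.log (ustar i / uhat i) = -(k:ℝ) * L := by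
    intro i
    have : ustar i / uhat i = β ^ (-(k:ℝ)) := by
      rw [hustar i, mul_comm, mul_div_assoc, div_self (huhat i).ne', mul_one]
    rw [this, Real.log_rpow hβpos]
  have hLv : ∀ j, Real.log (vstar j / vhat j) = L := by
    intro j
    have : vstar j / vhat j = β := by
      rw [hvstar j, mul_comm, mul_div_assoc, div_self (hvhat j).ne', mul_one]
    rw [this]
  have hustarpos : ∀ i, 0 < ustar i := fun i => by
    rw [hustar i]; exact mul_pos (huhat i) hβnk
  have hvstarpos : ∀ j, 0 < vstar j := fun j => by
    rw [hvstar j]; exact mul_pos (hvhat j) hβpos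
  -- pointwise decompositions
  have hptu : ∀ i, u i * Real.log (u i / uhat i) + uhat i - u i
      = (u i * Real.log (u i / ustar i) + ustar i - u i)
        + u i * (-(k:ℝ) * L) + (uhat i - ustar i) := by
    intro i
    rcases eq_or_lt_of_le (hu i) with h | h
    · rw [← h]; ring
    · have hLu2 : Real.log (ustar i) - Real.log (uhat i) = -(k:ℝ) * L := by
        rw [← Real.log_div (hustarpos i).ne' (huhat i).ne']; exact hLu i
      rw [Real.log_div h.ne' (huhat i).ne', Real.log_div h.ne' (hustarpos i).ne']
      linear_combination (u i) * hLu2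
  have hptv : ∀ j, v j * Real.log (v j / vhat j) + vhat j - v j
      = (v j * Real.log (v j / vstar j) + vstar j - v j)
        + v j * L + (vhat j - vstar j) := by
    intro j
    rcases eq_or_lt_of_le (hv j) with h | h
    · rw [← h]; ring
    · have hLv2 : Real.log (vstar j) - Real.log (vhat j) = L := by
        rw [← Real.log_div (hvstarpos j).ne' (hvhat j).ne']; exact hLv j
      rw [Real.log_div h.ne' (hvhat j).ne', Real.log_div h.ne' (hvstarpos j).ne']
      linear_combination (v j) * hLv2
  -- sum decompositions
  have hsumu : ∑ i, (u i * Real.log (u i / uhat i) + uhat i - u i)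
      = (∑ i, (u i * Real.log (u i / ustar i) + ustar i - u i))
        + (∑ i, u i) * (-(k:ℝ) * L) + ∑ i, (uhat i - ustar i) := by
    rw [Finset.sum_congr rfl (fun i _ => hptu i)]
    rw [Finset.sum_add_distrib, Finset.sum_add_distrib, Finset.sum_mul]
  have hsumv : ∑ j, (v j * Real.log (v j / vhat j) + vhat j - v j)
      = (∑ j, (v j * Real.log (v j / vstar j) + vstar j - v j))
        + (∑ j, v j) * L + ∑ j, (vhat j - vstar j) := by
    rw [Finset.sum_congr rfl (fun j _ => hptv j)]
    rw [Finset.sum_add_distrib, Finset.sum_add_distrib, Finset.sum_mul]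
  have hsumus : ∑ i, (ustar i * Real.log (ustar i / uhat i) + uhat i - ustar i)
      = (∑ i, ustar i) * (-(k:ℝ) * L) + ∑ i, (uhat i - ustar i) := by
    have hp : ∀ i, ustar i * Real.log (ustar i / uhat i) + uhat i - ustar i
        = ustar i * (-(k:ℝ) * L) + (uhat i - ustar i) := fun i => by rw [hLu i]; ring
    rw [Finset.sum_congr rfl (fun i _ => hp i), Finset.sum_add_distrib, Finset.sum_mul]
  have hsumvs : ∑ j, (vstar j * Real.log (vstar j / vhat j) + vhat j - vstar j)
      = (∑ j, vstar j) * L + ∑ j, (vhat j - vstar j) := by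
    have hp : ∀ j, vstar j * Real.log (vstar j / vhat j) + vhat j - vstar j
        = vstar j * L + (vhat j - vstar j) := fun j => by rw [hLv j]; ring
    rw [Finset.sum_congr rfl (fun j _ => hp j), Finset.sum_add_distrib, Finset.sum_mul]
  have hA : 0 ≤ ∑ i, (u i * Real.log (u i / ustar i) + ustar i - u i) :=
    Finset.sum_nonneg fun i _ => ent_term_nonneg (hu i) (hustarpos i)
  have hB : 0 ≤ ∑ j, (v j * Real.log (v j / vstar j) + vstar j - v j) :=
    Finset.sum_nonneg fun j _ => ent_term_nonneg (hv j) (hvstarpos j)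
  rw [hsumu, hsumv, hsumus, hsumvs, hcon, hbal']
  ring_nf at hA hB ⊢
  nlinarith [hA, hB]
end

section
/- Let V be a finite type, let r : V → V → Prop be a decidable edge relation admitting a topological ordering (there is f : V → ℕ with f(u) < f(v) whenever r v u), let w : V → V → ℝ be nonnegative edge weights, and for each v let Z(v) = ∑_{p ∈ P(v)} ∏_{edges (x,y) of p} w(x,y) be the total weight of all paths from v to the sinks; assume Z(v) > 0 for every v. Define pushed weights w'(v,u) = w(v,u)·Z(u)/Z(v) for r v u. Then: (a) for every non-sink v, ∑_{u : r v u} w'(v,u) = 1 (local normalization); (b) for every vertex s and every path p from s to a sink, ∏_{edges (x,y) of p} w'(x,y) = (∏_{edges (x,y) of p} w(x,y)) / Z(s) (product form); and consequently (c) ∑_{p ∈ P(s)} ∏_{edges of p} w' = 1, i.e., the pushed weights define a probability distribution over the paths from s to the sinks. -/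
open Finset

/-- `v` is a sink: it has no outgoing edges. -/
def IsSink {V : Type*} (r : V → V → Prop) (v : V) : Prop := ∀ u, ¬ r v u

/-- `p = [v₀, v₁, …, v_m]` is a path from `v` to the sinks:
it starts at `v`, consecutive vertices are joined by edges of `r`,
and the last vertex is a sink. -/
def IsPathFrom {V : Type*} (r : V → V → Prop) (v : V) (p : List V) : Prop :=
  p.head? = some v ∧ p.Chain' r ∧ ∀ x ∈ p.getLast?, IsSink r x

/-- The weight of a path `[v₀, …, v_m]` is `∏_{i<m} w(vᵢ, vᵢ₊₁)`. -/
def pathWeight {V : Type*} (w : V → V → ℝ) (p : List V) : ℝ :=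
  ((p.zip p.tail).map fun q => w q.1 q.2).prod

section Aux

variable {V : Type*} [Fintype V] [DecidableEq V] (r : V → V → Prop) [DecidableRel r]

lemma paths_finite (f : V → ℕ) (hf : ∀ u v, r v u → f u < f v) (v : V) :
    {p : List V | IsPathFrom r v p}.Finite := by
  apply (List.finite_length_le V (Fintype.card V)).subset
  rintro p ⟨-, hc, -⟩
  have h1 : (p.map f).Chain' (fun a b => b < a) := by
    exact (List.isChain_map f).mpr (hc.imp fun {a b} h => hf b a h)
  have h2 : (p.map f).Nodup :=
    (List.isChain_iff_pairwise.mp h1).imp fun {a b} h => ne_of_gt h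
  exact (h2.of_map f).length_le_card

lemma path_sink {v : V} (hv : IsSink r v) :
    {p : List V | IsPathFrom r v p} = {[v]} := by
  ext p
  simp only [Set.mem_setOf_eq, Set.mem_singleton_iff]
  constructor
  · rintro ⟨h1, h2, h3⟩
    match p with
    | [] => simp at h1
    | a :: t =>
      obtain rfl : a = v := by simpa using h1
      cases t with
      | nil => rfl
      | cons u q => exact absurd (List.isChain_cons_cons.mp h2).1 (hv u)
  · rintro rfl
    exact ⟨rfl, List.isChain_singleton v, by simpa using hv⟩

lemma pathWeight_singleton (w : V → V → ℝ) (v : V) : pathWeight w [v] = 1 := rfl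

lemma pathWeight_cons (w : V → V → ℝ) (v u : V) (q : List V) :
    pathWeight w (v :: u :: q) = w v u * pathWeight w (u :: q) := by
  simp [pathWeight]

lemma path_nonsink {v : V} (hv : ¬ IsSink r v) :
    {p : List V | IsPathFrom r v p} =
      ⋃ u ∈ (↑(Finset.univ.filter (fun u => r v u)) : Set V),
        (List.cons v) '' {q : List V | IsPathFrom r u q} := by
  ext p
  simp only [Set.mem_setOf_eq, Set.mem_iUnion, Finset.mem_coe, Finset.mem_filter,
    Finset.mem_univ, true_and, Set.mem_image, exists_prop]
  constructor
  · rintro ⟨h1, h2, h3⟩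
    match p with
    | [] => simp at h1
    | [a] =>
      obtain rfl : a = v := by simpa using h1
      exact absurd (by simpa using h3) hv
    | a :: u :: q =>
      obtain rfl : a = v := by simpa using h1
      exact ⟨u, (List.isChain_cons_cons.mp h2).1, u :: q,
        ⟨rfl, (List.isChain_cons_cons.mp h2).2, by simpa [List.getLast?_cons_cons] using h3⟩, rfl⟩
  · rintro ⟨u, hru, q, ⟨hq1, hq2, hq3⟩, rfl⟩
    match q with
    | [] => simp at hq1
    | b :: t =>
      obtain rfl : b = u := by simpa using hq1
      exact ⟨rfl, List.isChain_cons_cons.mpr ⟨hru, hq2⟩,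
        by simpa [List.getLast?_cons_cons] using hq3⟩

lemma sum_paths_eq (f : V → ℕ) (hf : ∀ u v, r v u → f u < f v) (W : V → V → ℝ)
    {v : V} (hv : ¬ IsSink r v) :
    ∑ᶠ p ∈ {p : List V | IsPathFrom r v p}, pathWeight W p
      = ∑ u ∈ Finset.univ.filter (fun u => r v u), W v u *
          ∑ᶠ q ∈ {q : List V | IsPathFrom r u q}, pathWeight W q := by
  rw [path_nonsink r hv]
  rw [finsum_mem_biUnion ?disj (Finset.finite_toSet _)
    (fun u _ => ((paths_finite r f hf u).image _))]
  case disj =>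
    intro a _ b _ hab
    rw [Function.onFun, Set.disjoint_left]
    rintro p ⟨q, hq, rfl⟩ ⟨q', hq', hc⟩
    obtain rfl : q' = q := by simpa using hc
    exact hab (by rw [← Option.some_inj, ← hq.1, ← hq'.1])
  rw [finsum_mem_coe_finset]
  refine Finset.sum_congr rfl fun u hu => ?_
  rw [finsum_mem_image (fun a _ b _ h => by simpa using h)]
  have hPu := paths_finite r f hf u
  rw [← hPu.coe_toFinset, finsum_mem_coe_finset, finsum_mem_coe_finset, Finset.mul_sum]
  refine Finset.sum_congr rfl fun q hq => ?_
  have hq' : IsPathFrom r u q := by simpa using (hPu.mem_toFinset.mp hq)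
  match q with
  | [] => simp [IsPathFrom] at hq'
  | b :: t =>
    obtain rfl : b = u := by simpa using hq'.1
    exact pathWeight_cons W v b t

end Aux

/-- Generalized weight pushing on a finite DAG: with `Z(v)` the total weight
of all paths from `v` to the sinks (assumed positive everywhere), the pushed
weights `w'(v,u) = w(v,u)·Z(u)/Z(v)` are (a) locally normalized at each
non-sink, (b) in product form, giving each path from `s` weight
`(∏ w over the path)/Z(s)`, and hence (c) define a probability distribution
over the paths from `s` to the sinks. -/
theorem weight_pushing
    {V : Type*} [Fintype V] [DecidableEq V]
    (r : V → V → Prop) [DecidableRel r]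
    (f : V → ℕ) (hf : ∀ u v, r v u → f u < f v)
    (w : V → V → ℝ) (hw : ∀ v u, 0 ≤ w v u)
    (Z : V → ℝ)
    (hZ : ∀ v, Z v = ∑ᶠ p ∈ {p : List V | IsPathFrom r v p}, pathWeight w p)
    (hZpos : ∀ v, 0 < Z v)
    (w' : V → V → ℝ)
    (hw' : ∀ v u, w' v u = w v u * Z u / Z v) :
    (∀ v, ¬ IsSink r v →
        ∑ u ∈ Finset.univ.filter (fun u => r v u), w' v u = 1) ∧
      (∀ (s : V) (p : List V), IsPathFrom r s p →
        pathWeight w' p = pathWeight w p / Z s) ∧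
      (∀ s : V,
        ∑ᶠ p ∈ {p : List V | IsPathFrom r s p}, pathWeight w' p = 1) := by
  have hZsink : ∀ v, IsSink r v → Z v = 1 := by
    intro v hv
    rw [hZ v, path_sink r hv, finsum_mem_singleton, pathWeight_singleton]
  have hZrec : ∀ v, ¬ IsSink r v →
      Z v = ∑ u ∈ Finset.univ.filter (fun u => r v u), w v u * Z u := by
    intro v hv
    rw [hZ v, sum_paths_eq r f hf w hv]
    exact Finset.sum_congr rfl fun u _ => by rw [← hZ u]
  have keyB : ∀ (p : List V) (s : V), IsPathFrom r s p →
      pathWeight w' p = pathWeight w p / Z s := by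
    intro p
    induction p with
    | nil => intro s hp; simp [IsPathFrom] at hp
    | cons a t ih =>
      intro s hp
      obtain ⟨h1, h2, h3⟩ := hp
      obtain rfl : a = s := by simpa using h1
      cases t with
      | nil =>
        rw [pathWeight_singleton, pathWeight_singleton, hZsink a (by simpa using h3)]
        norm_num
      | cons u q =>
        have hru : r a u := (List.isChain_cons_cons.mp h2).1
        have hpath : IsPathFrom r u (u :: q) :=
          ⟨rfl, (List.isChain_cons_cons.mp h2).2, by simpa [List.getLast?_cons_cons] using h3⟩
        have hu0 : Z u ≠ 0 := (hZpos u).ne'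
        have hs0 : Z a ≠ 0 := (hZpos a).ne'
        rw [pathWeight_cons, pathWeight_cons, ih u hpath, hw']
        field_simp
  refine ⟨?_, fun s p hp => keyB p s hp, ?_⟩
  · intro v hv
    have hs0 : Z v ≠ 0 := (hZpos v).ne'
    have : ∑ u ∈ Finset.univ.filter (fun u => r v u), w' v u
        = (∑ u ∈ Finset.univ.filter (fun u => r v u), w v u * Z u) / Z v := by
      rw [Finset.sum_div]
      exact Finset.sum_congr rfl fun u _ => hw' v u
    rw [this, ← hZrec v hv, div_self hs0]
  · intro s
    have hfin := paths_finite r f hf s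
    calc ∑ᶠ p ∈ {p : List V | IsPathFrom r s p}, pathWeight w' p
        = ∑ p ∈ hfin.toFinset, pathWeight w' p :=
          finsum_mem_eq_finite_toFinset_sum _ hfin
      _ = ∑ p ∈ hfin.toFinset, pathWeight w p / Z s :=
          Finset.sum_congr rfl fun p hp => keyB p s (hfin.mem_toFinset.mp hp)
      _ = (∑ p ∈ hfin.toFinset, pathWeight w p) / Z s := by rw [Finset.sum_div]
      _ = Z s / Z s := by
          rw [← finsum_mem_eq_finite_toFinset_sum (pathWeight w) hfin, ← hZ s]
      _ = 1 := div_self (hZpos s).ne'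
end

section
/- Let V be a finite type, let r : V → V → Prop be a decidable edge relation admitting a topological ordering (there is f : V → ℕ with f(u) < f(v) whenever r v u), and let s ∈ V be a source, i.e., no u satisfies r u s. Let w : V → V → ℝ be nonnegative with w(v,u) = 0 whenever ¬ r v u, satisfying the unit-flow constraints: ∑_{u} w(s,u) = 1, and for every vertex v other than s that is not a sink, ∑_{u} w(u,v) = ∑_{u} w(v,u) (flow conservation). Then there exist finitely many paths p₁, …, p_m from s to the sinks and coefficients λ₁, …, λ_m > 0 with ∑_i λ_i = 1 such that for every ordered pair (v,u), w(v,u) = ∑_{i : (v,u) is an edge of p_i} λ_i; moreover one can take m at most the number of pairs (v,u) with w(v,u) > 0. (Every point of the unit-flow polytope of a DAG is a convex combination of source-to-sink paths.) -/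
set_option linter.unusedSectionVars false
set_option linter.unusedVariables false


open Finset

section Aux
variable {V : Type*} [Fintype V] [DecidableEq V]

lemma nodup_of_chain' {r : V → V → Prop} (f : V → ℕ) (hf : ∀ u v, r v u → f u < f v)
    (p : List V) (hc : p.Chain' r) : p.Nodup := by
  haveI : IsTrans V (fun a b => f b < f a) := ⟨fun a b c h1 h2 => h2.trans h1⟩
  have h2 : p.Chain' (fun a b => f b < f a) := List.IsChain.imp (fun a b h => hf b a h) hc
  have h3 : p.Pairwise (fun a b => f b < f a) := List.isChain_iff_pairwise.mp h2
  exact h3.imp (fun h => by rintro rfl; exact lt_irrefl _ h)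

lemma outdeg_sum (p : List V) (hp : p.Nodup) (v : V) :
    ∑ u, (if (v, u) ∈ p.zip p.tail then (1:ℝ) else 0) =
      if v ∈ p.dropLast then 1 else 0 := by
  induction p with
  | nil => simp
  | cons a q ih =>
    cases q with
    | nil => simp
    | cons b l =>
      have hp' : (b :: l).Nodup := hp.of_cons
      have hanot : a ∉ b :: l := (List.nodup_cons.mp hp).1
      by_cases hv : v = a
      · subst hv
        have h1 : ∀ u, ((v, u) ∈ (v :: b :: l).zip (b :: l) ↔ u = b) := by
          intro u
          simp only [List.zip_cons_cons, List.mem_cons]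
          constructor
          · rintro (h | h)
            · exact (Prod.mk.injEq _ _ _ _ ▸ h).2 ▸ (congrArg Prod.snd h)
            · exact absurd (List.of_mem_zip h).1 hanot
          · rintro rfl; exact Or.inl rfl
        simp only [List.tail_cons, h1]
        rw [Finset.sum_ite_eq' Finset.univ b (fun _ => (1:ℝ))]
        simp [List.dropLast]
      · have h1 : ∀ u, ((v, u) ∈ (a :: b :: l).zip (b :: l) ↔ (v, u) ∈ (b :: l).zip l) := by
          intro u
          simp only [List.zip_cons_cons, List.mem_cons]
          constructor
          · rintro (h | h)
            · exact absurd (congrArg Prod.fst h) hv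
            · exact h
          · exact Or.inr
        simp only [List.tail_cons, h1]
        have := ih hp'
        rw [show ((b :: l).zip (b :: l).tail) = (b :: l).zip l from rfl] at this
        rw [this]
        have hd : (a :: b :: l).dropLast = a :: (b :: l).dropLast := by
          simp [List.dropLast]
        rw [hd]
        simp [List.mem_cons, hv]

lemma indeg_sum (p : List V) (hp : p.Nodup) (v : V) :
    ∑ u, (if (u, v) ∈ p.zip p.tail then (1:ℝ) else 0) =
      if v ∈ p.tail then 1 else 0 := by
  induction p with
  | nil => simp
  | cons a q ih =>
    cases q with
    | nil => simp
    | cons b l =>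
      have hp' : (b :: l).Nodup := hp.of_cons
      have hbnot : b ∉ l := (List.nodup_cons.mp hp').1
      by_cases hv : v = b
      · subst hv
        have h1 : ∀ u, ((u, v) ∈ (a :: v :: l).zip (v :: l) ↔ u = a) := by
          intro u
          simp only [List.zip_cons_cons, List.mem_cons]
          constructor
          · rintro (h | h)
            · exact congrArg Prod.fst h
            · exact absurd (List.of_mem_zip h).2 hbnot
          · rintro rfl; exact Or.inl rfl
        simp only [List.tail_cons, h1]
        rw [Finset.sum_ite_eq' Finset.univ a (fun _ => (1:ℝ))]
        simp
      · have h1 : ∀ u, ((u, v) ∈ (a :: b :: l).zip (b :: l) ↔ (u, v) ∈ (b :: l).zip l) := by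
          intro u
          simp only [List.zip_cons_cons, List.mem_cons]
          constructor
          · rintro (h | h)
            · exact absurd (congrArg Prod.snd h) hv
            · exact h
          · exact Or.inr
        simp only [List.tail_cons, h1]
        have := ih hp'
        rw [show ((b :: l).zip (b :: l).tail) = (b :: l).zip l from rfl] at this
        rw [this]
        simp [List.mem_cons, hv]
        exact if_congr Iff.rfl rfl rfl

end Aux

section Main
variable {V : Type*} [Fintype V] [DecidableEq V]
variable (r : V → V → Prop) [DecidableRel r]

lemma exists_path (f : V → ℕ) (hf : ∀ u v, r v u → f u < f v)
    (s : V) (hs : ∀ u, ¬ r u s)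
    (w : V → V → ℝ) (hw : ∀ v u, 0 ≤ w v u)
    (hsupp : ∀ v u, ¬ r v u → w v u = 0)
    (hcons : ∀ v, v ≠ s → ¬ IsSink r v → ∑ u, w u v = ∑ u, w v u) :
    ∀ n : ℕ, ∀ v, f v ≤ n → (IsSink r v ∨ 0 < ∑ u, w v u) →
      ∃ p : List V, IsPathFrom r v p ∧ ∀ q ∈ p.zip p.tail, 0 < w q.1 q.2 := by
  intro n
  induction n with
  | zero =>
    intro v hv h
    rcases h with h | h
    · exact ⟨[v], ⟨rfl, List.isChain_singleton v, by simpa using h⟩, by simp⟩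
    · exfalso
      obtain ⟨u, -, hu⟩ : ∃ u ∈ Finset.univ, 0 < w v u := by
        by_contra hc
        push_neg at hc
        have : ∑ u, w v u ≤ 0 := Finset.sum_nonpos (fun u hu => hc u hu)
        linarith
      have hr : r v u := by by_contra hr; rw [hsupp v u hr] at hu; exact lt_irrefl 0 hu
      exact absurd (hf u v hr) (by omega)
  | succ n ih =>
    intro v hv h
    rcases h with h | h
    · exact ⟨[v], ⟨rfl, List.isChain_singleton v, by simpa using h⟩, by simp⟩
    · obtain ⟨u, -, hu⟩ : ∃ u ∈ Finset.univ, 0 < w v u := by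
        by_contra hc
        push_neg at hc
        have : ∑ u, w v u ≤ 0 := Finset.sum_nonpos (fun u hu => hc u hu)
        linarith
      have hr : r v u := by by_contra hr; rw [hsupp v u hr] at hu; exact lt_irrefl 0 hu
      have hfu : f u ≤ n := by have := hf u v hr; omega
      have hcond : IsSink r u ∨ 0 < ∑ a, w u a := by
        by_cases hsink : IsSink r u
        · exact Or.inl hsink
        · right
          have hune : u ≠ s := by rintro rfl; exact hs v hr
          rw [← hcons u hune hsink]
          calc (0:ℝ) < w v u := hu
            _ ≤ ∑ a, w a u := Finset.single_le_sum (fun a _ => hw a u) (Finset.mem_univ v)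
      obtain ⟨p, ⟨hhead, hchain, hlast⟩, hpos⟩ := ih u hfu hcond
      have hpne : p ≠ [] := by rintro rfl; simp at hhead
      obtain ⟨b, q, rfl⟩ : ∃ b q, p = b :: q := ⟨p.head hpne, p.tail, (List.cons_head_tail hpne).symm⟩
      have hb : b = u := by simpa using hhead
      have hr' : r v b := hb ▸ hr
      have hu' : 0 < w v b := hb ▸ hu
      refine ⟨v :: b :: q, ⟨rfl, List.isChain_cons_cons.mpr ⟨hr', hchain⟩, ?_⟩, ?_⟩
      · intro x hx
        apply hlast
        simpa using hx
      · intro e he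
        simp only [List.tail_cons, List.zip_cons_cons, List.mem_cons] at he
        rcases he with rfl | he
        · exact hu'
        · exact hpos e he

lemma zero_flow (f : V → ℕ) (hf : ∀ u v, r v u → f u < f v)
    (s : V) (hs : ∀ u, ¬ r u s)
    (w : V → V → ℝ) (hw : ∀ v u, 0 ≤ w v u)
    (hsupp : ∀ v u, ¬ r v u → w v u = 0)
    (hsrc : ∑ u, w s u = 0)
    (hcons : ∀ v, v ≠ s → ¬ IsSink r v → ∑ u, w u v = ∑ u, w v u) :
    ∀ v u, w v u = 0 := by
  by_contra hc
  push_neg at hc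
  obtain ⟨v0, u0, hvu⟩ := hc
  have hS : (Finset.univ.filter (fun q : V × V => 0 < w q.1 q.2)).Nonempty :=
    ⟨(v0, u0), by simp [lt_of_le_of_ne (hw v0 u0) (Ne.symm hvu)]⟩
  obtain ⟨q, hqS, hqmax⟩ := Finset.exists_max_image _ (fun q : V × V => f q.1) hS
  obtain ⟨a, b⟩ := q
  simp only [Finset.mem_filter] at hqS
  have hab : 0 < w a b := hqS.2
  have hr : r a b := by by_contra hr; rw [hsupp a b hr] at hab; exact lt_irrefl 0 hab
  have hanes : a ≠ s := by
    intro h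
    have hb' : 0 < w s b := h ▸ hab
    have h0 : w s b = 0 :=
      (Finset.sum_eq_zero_iff_of_nonneg (fun u _ => hw s u)).mp hsrc b (Finset.mem_univ b)
    linarith
  have hasink : ¬ IsSink r a := fun hsink => hsink b hr
  have hin : 0 < ∑ u, w u a := by
    rw [hcons a hanes hasink]
    calc (0:ℝ) < w a b := hab
      _ ≤ ∑ u, w a u := Finset.single_le_sum (fun u _ => hw a u) (Finset.mem_univ b)
  obtain ⟨c, -, hc⟩ : ∃ c ∈ Finset.univ, 0 < w c a := by
    by_contra hcc
    push_neg at hcc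
    have : ∑ u, w u a ≤ 0 := Finset.sum_nonpos (fun u hu => hcc u hu)
    linarith
  have hrc : r c a := by by_contra hr'; rw [hsupp c a hr'] at hc; exact lt_irrefl 0 hc
  have h1 : f c ≤ f a := hqmax (c, a) (by simp [hc])
  have h2 : f a < f c := hf a c hrc
  omega

end Main

section Key
variable {V : Type*} [Fintype V] [DecidableEq V]
variable (r : V → V → Prop) [DecidableRel r]

lemma key_decomp (f : V → ℕ) (hf : ∀ u v, r v u → f u < f v)
    (s : V) (hs : ∀ u, ¬ r u s) :
    ∀ n : ℕ, ∀ w : V → V → ℝ, (∀ v u, 0 ≤ w v u) →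
    (∀ v u, ¬ r v u → w v u = 0) →
    (∑ u, w s u = 1) →
    (∀ v, v ≠ s → ¬ IsSink r v → ∑ u, w u v = ∑ u, w v u) →
    ((Finset.univ : Finset (V × V)).filter (fun q => 0 < w q.1 q.2)).card ≤ n →
    ∃ (m : ℕ) (paths : Fin m → List V) (lam : Fin m → ℝ),
      (∀ i, IsPathFrom r s (paths i)) ∧
      (∀ i, 0 < lam i) ∧
      (∑ i, lam i = 1) ∧
      (∀ v u : V, w v u =
        ∑ i ∈ Finset.univ.filter
          (fun i => (v, u) ∈ (paths i).zip (paths i).tail), lam i) ∧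
      m ≤ ((Finset.univ : Finset (V × V)).filter
            (fun q => 0 < w q.1 q.2)).card := by
  intro n
  induction n with
  | zero =>
    intro w hw hsupp hsrc hcons hcard
    exfalso
    have hempty : (Finset.univ : Finset (V × V)).filter (fun q => 0 < w q.1 q.2) = ∅ :=
      Finset.card_eq_zero.mp (Nat.le_zero.mp hcard)
    have hzero : ∀ v u, w v u = 0 := by
      intro v u
      by_contra h
      have hpos : 0 < w v u := lt_of_le_of_ne (hw v u) (Ne.symm h)
      have : (v, u) ∈ (Finset.univ : Finset (V × V)).filter (fun q => 0 < w q.1 q.2) := by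
        simp [hpos]
      rw [hempty] at this
      exact absurd this (Finset.notMem_empty _)
    rw [Finset.sum_eq_zero (fun u _ => hzero s u)] at hsrc
    norm_num at hsrc
  | succ n ih =>
    intro w hw hsupp hsrc hcons hcard
    -- get a path from s with positive edge weights
    obtain ⟨p, hpath, hpos⟩ := exists_path r f hf s hs w hw hsupp hcons (f s) s le_rfl
      (Or.inr (by rw [hsrc]; norm_num))
    obtain ⟨hhead, hchain, hlast⟩ := hpath
    have hnodup := nodup_of_chain' f hf p hchain
    have hpne : p ≠ [] := by rintro rfl; simp at hhead
    -- p starts with s and has at least two elements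
    have hhd : p.head hpne = s := by
      have h2 := List.head?_eq_head (l := p) hpne
      rw [hhead] at h2
      exact (Option.some.inj h2).symm
    obtain ⟨t, rfl⟩ : ∃ t, p = s :: t :=
      ⟨p.tail, by rw [← hhd, List.cons_head_tail]⟩
    obtain ⟨b, q, rfl⟩ : ∃ b q, t = b :: q := by
      cases t with
      | nil =>
        exfalso
        have hsink : IsSink r s := by
          have := hlast s (by simp)
          exact this
        have : ∑ u, w s u = 0 := Finset.sum_eq_zero (fun u _ => hsupp s u (hsink u))
        rw [hsrc] at this; norm_num at this
      | cons b q => exact ⟨b, q, rfl⟩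
    set p : List V := s :: b :: q with hpdef
    set E : List (V × V) := p.zip p.tail with hEdef
    have hEfirst : (s, b) ∈ E := by simp [hEdef, hpdef]
    -- minimum weight on the path
    obtain ⟨e0, he0S, he0min⟩ := Finset.exists_min_image E.toFinset (fun e => w e.1 e.2)
      ⟨(s, b), List.mem_toFinset.mpr hEfirst⟩
    set lam0 : ℝ := w e0.1 e0.2 with hlam0def
    have he0E : e0 ∈ E := List.mem_toFinset.mp he0S
    have hlam0pos : 0 < lam0 := hpos e0 he0E
    have hmin : ∀ e ∈ E, lam0 ≤ w e.1 e.2 := fun e he => he0min e (List.mem_toFinset.mpr he)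
    -- residual flow
    set w' : V → V → ℝ := fun v u => w v u - (if (v, u) ∈ E then lam0 else 0) with hw'def
    have hw' : ∀ v u, 0 ≤ w' v u := by
      intro v u
      simp only [hw'def]
      split
      · next h => linarith [hmin (v, u) h]
      · linarith [hw v u]
    have hle : ∀ v u, w' v u ≤ w v u := by
      intro v u
      simp only [hw'def]
      split
      · linarith
      · linarith
    have hsupp' : ∀ v u, ¬ r v u → w' v u = 0 := by
      intro v u h
      have hnot : (v, u) ∉ E := by
        intro hmem
        have := hpos (v, u) hmem
        rw [hsupp v u h] at this
        exact lt_irrefl 0 this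
      simp only [hw'def, if_neg hnot, hsupp v u h, sub_zero]
    have hout : ∀ v, (∑ u, (if (v, u) ∈ E then lam0 else 0 : ℝ)) =
        if v ∈ p.dropLast then lam0 else 0 := by
      intro v
      calc (∑ u, (if (v, u) ∈ E then lam0 else 0 : ℝ))
          = lam0 * ∑ u, (if (v, u) ∈ E then (1:ℝ) else 0) := by
            rw [Finset.mul_sum]
            exact Finset.sum_congr rfl (fun u _ => by rw [mul_ite, mul_one, mul_zero])
        _ = lam0 * (if v ∈ p.dropLast then 1 else 0) := by rw [outdeg_sum p hnodup v]
        _ = _ := by rw [mul_ite, mul_one, mul_zero]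
    have hin : ∀ v, (∑ u, (if (u, v) ∈ E then lam0 else 0 : ℝ)) =
        if v ∈ p.tail then lam0 else 0 := by
      intro v
      calc (∑ u, (if (u, v) ∈ E then lam0 else 0 : ℝ))
          = lam0 * ∑ u, (if (u, v) ∈ E then (1:ℝ) else 0) := by
            rw [Finset.mul_sum]
            exact Finset.sum_congr rfl (fun u _ => by rw [mul_ite, mul_one, mul_zero])
        _ = lam0 * (if v ∈ p.tail then 1 else 0) := by rw [indeg_sum p hnodup v]
        _ = _ := by rw [mul_ite, mul_one, mul_zero]
    have hsrc' : ∑ u, w' s u = 1 - lam0 := by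
      simp only [hw'def]
      rw [Finset.sum_sub_distrib, hsrc, hout s, if_pos (by simp [hpdef])]
    have hcons' : ∀ v, v ≠ s → ¬ IsSink r v → ∑ u, w' u v = ∑ u, w' v u := by
      intro v hvne hvsink
      simp only [hw'def]
      rw [Finset.sum_sub_distrib, Finset.sum_sub_distrib, hcons v hvne hvsink, hin v, hout v]
      congr 1
      have hiff : v ∈ p.tail ↔ v ∈ p.dropLast := by
        constructor
        · intro hv
          by_contra hnd
          have hvp : v ∈ p := List.mem_of_mem_tail hv
          have hsplit : p.dropLast ++ [p.getLast hpne] = p := List.dropLast_append_getLast hpne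
          have : v ∈ p.dropLast ++ [p.getLast hpne] := by rw [hsplit]; exact hvp
          rw [List.mem_append, List.mem_singleton] at this
          rcases this with h | h
          · exact hnd h
          · subst h
            exact hvsink (hlast _ (by rw [List.getLast?_eq_getLast hpne]; simp))
        · intro hv
          have hvp : v ∈ p := (List.dropLast_sublist p).subset hv
          rw [hpdef] at hvp
          rcases List.mem_cons.mp hvp with h | h
          · exact absurd h hvne
          · exact h
      by_cases h : v ∈ p.tail
      · rw [if_pos h, if_pos (hiff.mp h)]
      · rw [if_neg h, if_neg (fun hh => h (hiff.mpr hh))]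
    -- support strictly decreases
    have hsubset : (Finset.univ : Finset (V × V)).filter (fun e => 0 < w' e.1 e.2) ⊂
        (Finset.univ : Finset (V × V)).filter (fun e => 0 < w e.1 e.2) := by
      constructor
      · intro e he
        simp only [Finset.mem_filter] at he ⊢
        exact ⟨he.1, lt_of_lt_of_le he.2 (hle e.1 e.2)⟩
      · intro hcontra
        have he0 : e0 ∈ (Finset.univ : Finset (V × V)).filter (fun e => 0 < w e.1 e.2) :=
          Finset.mem_filter.mpr ⟨Finset.mem_univ _, hlam0pos⟩
        have := hcontra he0
        simp only [Finset.mem_filter] at this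
        have hz : w' e0.1 e0.2 = 0 := by
          simp only [hw'def, if_pos (show (e0.1, e0.2) ∈ E by simpa using he0E)]
          rw [← hlam0def]; ring
        rw [hz] at this
        exact lt_irrefl 0 this.2
    have hcard' : ((Finset.univ : Finset (V × V)).filter (fun e => 0 < w' e.1 e.2)).card ≤ n := by
      have := Finset.card_lt_card hsubset
      omega
    by_cases hall : ∀ v u, w' v u = 0
    · -- single path, lam0 = 1
      have hl1 : lam0 = 1 := by
        have : ∑ u, w' s u = 0 := Finset.sum_eq_zero (fun u _ => hall s u)
        rw [hsrc'] at this; linarith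
      refine ⟨1, fun _ => p, fun _ => 1, fun _ => ⟨hhead, hchain, hlast⟩, fun _ => one_pos,
        by simp, ?_, ?_⟩
      · intro v u
        rw [Finset.sum_filter]
        have hval : w v u = if (v, u) ∈ E then 1 else 0 := by
          have := hall v u
          simp only [hw'def] at this
          rw [← hl1]
          linarith [this]
        rw [hval]
        simp [hEdef]
      · rw [Nat.one_le_iff_ne_zero, ← Nat.pos_iff_ne_zero, Finset.card_pos]
        exact ⟨(s, b), by simp [hpos (s, b) hEfirst]⟩
    · -- lam0 < 1, recurse
      have hlam0lt : lam0 < 1 := by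
        rcases lt_or_eq_of_le (show lam0 ≤ 1 by
          calc lam0 ≤ w s b := hmin (s, b) hEfirst
            _ ≤ ∑ u, w s u := Finset.single_le_sum (fun u _ => hw s u) (Finset.mem_univ b)
            _ = 1 := hsrc) with h | h
        · exact h
        · exfalso
          have hz : ∑ u, w' s u = 0 := by rw [hsrc', h]; ring
          exact hall (zero_flow r f hf s hs w' hw' hsupp' hz hcons')
      have hne1 : (1 : ℝ) - lam0 ≠ 0 := by linarith
      have hposc : 0 < (1 : ℝ) - lam0 := by linarith
      set w'' : V → V → ℝ := fun v u => (1 - lam0)⁻¹ * w' v u with hw''def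
      have hw'' : ∀ v u, 0 ≤ w'' v u := fun v u =>
        mul_nonneg (inv_nonneg.mpr (le_of_lt hposc)) (hw' v u)
      have hsupp'' : ∀ v u, ¬ r v u → w'' v u = 0 := by
        intro v u h; simp only [hw''def]; rw [hsupp' v u h, mul_zero]
      have hsrc'' : ∑ u, w'' s u = 1 := by
        simp only [hw''def]
        rw [← Finset.mul_sum, hsrc', inv_mul_cancel₀ hne1]
      have hcons'' : ∀ v, v ≠ s → ¬ IsSink r v → ∑ u, w'' u v = ∑ u, w'' v u := by
        intro v h1 h2
        simp only [hw''def]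
        rw [← Finset.mul_sum, ← Finset.mul_sum, hcons' v h1 h2]
      have hsame : (Finset.univ : Finset (V × V)).filter (fun e => 0 < w'' e.1 e.2) =
          (Finset.univ : Finset (V × V)).filter (fun e => 0 < w' e.1 e.2) := by
        apply Finset.filter_congr
        intro e _
        simp only [hw''def]
        exact (mul_pos_iff_of_pos_left (inv_pos.mpr hposc))
      obtain ⟨m', paths', lam', hp', hl'pos, hl'sum, hform', hm'⟩ :=
        ih w'' hw'' hsupp'' hsrc'' hcons'' (by rw [hsame]; exact hcard')
      refine ⟨m' + 1, Fin.cons p paths', Fin.cons lam0 (fun i => (1 - lam0) * lam' i),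
        ?_, ?_, ?_, ?_, ?_⟩
      · intro i
        refine Fin.cases ?_ ?_ i
        · simpa [IsPathFrom] using (⟨hhead, hchain, hlast⟩ : IsPathFrom r s p)
        · intro j; simpa using hp' j
      · intro i
        refine Fin.cases ?_ ?_ i
        · simpa using hlam0pos
        · intro j; simpa using mul_pos hposc (hl'pos j)
      · rw [Fin.sum_univ_succ]
        simp only [Fin.cons_zero, Fin.cons_succ]
        rw [← Finset.mul_sum, hl'sum, mul_one]
        ring
      · intro v u
        rw [Finset.sum_filter, Fin.sum_univ_succ]
        simp only [Fin.cons_zero, Fin.cons_succ]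
        have hrest : (∑ i : Fin m', if (v, u) ∈ (paths' i).zip (paths' i).tail then
            (1 - lam0) * lam' i else 0) = (1 - lam0) *
            ∑ i : Fin m', (if (v, u) ∈ (paths' i).zip (paths' i).tail then lam' i else 0) := by
          rw [Finset.mul_sum]
          exact Finset.sum_congr rfl (fun i _ => by rw [mul_ite, mul_zero])
        rw [hrest, ← Finset.sum_filter, ← hform' v u]
        simp only [hw''def]
        rw [← mul_assoc, mul_inv_cancel₀ hne1, one_mul]
        simp only [hw'def]
        ring
      · have hclt := Finset.card_lt_card hsubset
        have : m' ≤ ((Finset.univ : Finset (V × V)).filter (fun e => 0 < w' e.1 e.2)).card := by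
          rw [← hsame]; exact hm'
        omega

end Key



/-- Path decomposition of the unit-flow polytope of a finite DAG:
every nonnegative edge-weight vector supported on the edges, with unit
outflow at the source `s` and flow conservation at every intermediate
non-sink vertex, is a convex combination of (indicator vectors of) paths
from `s` to the sinks, using at most as many paths as there are edges of
positive weight. -/
theorem unit_flow_decomposition
    {V : Type*} [Fintype V] [DecidableEq V]
    (r : V → V → Prop) [DecidableRel r]
    (f : V → ℕ) (hf : ∀ u v, r v u → f u < f v)
    (s : V) (hs : ∀ u, ¬ r u s)
    (w : V → V → ℝ) (hw : ∀ v u, 0 ≤ w v u)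
    (hsupp : ∀ v u, ¬ r v u → w v u = 0)
    (hsrc : ∑ u, w s u = 1)
    (hcons : ∀ v, v ≠ s → ¬ IsSink r v → ∑ u, w u v = ∑ u, w v u) :
    ∃ (m : ℕ) (paths : Fin m → List V) (lam : Fin m → ℝ),
      (∀ i, IsPathFrom r s (paths i)) ∧
      (∀ i, 0 < lam i) ∧
      (∑ i, lam i = 1) ∧
      (∀ v u : V, w v u =
        ∑ i ∈ Finset.univ.filter
          (fun i => (v, u) ∈ (paths i).zip (paths i).tail), lam i) ∧
      m ≤ ((Finset.univ : Finset (V × V)).filter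
            (fun q => 0 < w q.1 q.2)).card := by
  exact key_decomp r f hf s hs
    ((Finset.univ : Finset (V × V)).filter (fun q => 0 < w q.1 q.2)).card
    w hw hsupp hsrc hcons le_rfl
end
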